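/- Let α₃ ∈ ℝ and set α₁ = −6α₃ and α₂ = 6α₃. Then for every twice continuously differentiable matrix field P : ℝ³ → ℝ^{3×3} and every x ∈ ℝ³, the matrix Curl( α₁ · dev sym Curl P + α₂ · skew Curl P + α₃ · tr(Curl P) · 𝟙 )(x) is symmetric. -/

import Mathlib

open MeasureTheory

noncomputable section

/-- Points of ℝ³. -/
abbrev R3 : Type := Fin 3 → ℝ
/-- 3×3 real matrices (as functions). -/
abbrev M3 : Type := Fin 3 → Fin 3 → ℝ

/-- Frobenius inner product ⟨X,Y⟩ = tr(X Yᵀ) = ∑ᵢⱼ Xᵢⱼ Yᵢⱼ. -/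
def finner (X Y : M3) : ℝ := ∑ i, ∑ j, X i j * Y i j

/-- Squared Frobenius norm ‖X‖². -/
def fnormSq (X : M3) : ℝ := finner X X

/-- Matrix trace. -/
def trM (X : M3) : ℝ := ∑ i, X i i

/-- Matrix transpose. -/
def transp (X : M3) : M3 := fun i j => X j i

/-- Symmetric part sym X = (X + Xᵀ)/2. -/
def symMat (X : M3) : M3 := fun i j => (X i j + X j i) / 2

/-- Skew-symmetric part skew X = (X − Xᵀ)/2. -/
def skeww (X : M3) : M3 := fun i j => (X i j - X j i) / 2

/-- 3×3 identity matrix. -/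
def idM : M3 := fun i j => if i = j then 1 else 0

/-- Deviatoric (trace-free) part dev X = X − (tr X / 3)·𝟙. -/
def devv (X : M3) : M3 := fun i j => X i j - (trM X / 3) * idM i j

/-- X is a symmetric matrix. -/
def isSymmM (X : M3) : Prop := ∀ i j, X i j = X j i

/-- Partial derivative ∂ⱼ f (x). -/
def pd (j : Fin 3) (f : R3 → ℝ) (x : R3) : ℝ := fderiv ℝ f x (Pi.single j 1)

/-- curl v = (∂₂v₃ − ∂₃v₂, ∂₃v₁ − ∂₁v₃, ∂₁v₂ − ∂₂v₁) (0-based indices). -/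
def curlV (v : R3 → R3) (x : R3) : R3 :=
  ![pd 1 (fun y => v y 2) x - pd 2 (fun y => v y 1) x,
    pd 2 (fun y => v y 0) x - pd 0 (fun y => v y 2) x,
    pd 0 (fun y => v y 1) x - pd 1 (fun y => v y 0) x]

/-- Row-wise Curl of a matrix field: the i-th row of Curl P is curl of the i-th row of P. -/
def CurlM (P : R3 → M3) (x : R3) : M3 := fun i => curlV (fun y => P y i) x

/-- Jacobian matrix (∇u)ᵢⱼ = ∂ⱼ uᵢ. -/
def jac (u : R3 → R3) (x : R3) : M3 := fun i j => pd j (fun y => u y i) x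


lemma CurlM_app0 (Q : R3 → M3) (x : R3) (i : Fin 3) :
    CurlM Q x i 0 = pd 1 (fun y => Q y i 2) x - pd 2 (fun y => Q y i 1) x := rfl
lemma CurlM_app1 (Q : R3 → M3) (x : R3) (i : Fin 3) :
    CurlM Q x i 1 = pd 2 (fun y => Q y i 0) x - pd 0 (fun y => Q y i 2) x := rfl
lemma CurlM_app2 (Q : R3 → M3) (x : R3) (i : Fin 3) :
    CurlM Q x i 2 = pd 0 (fun y => Q y i 1) x - pd 1 (fun y => Q y i 0) x := rfl

set_option maxHeartbeats 1000000 in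
lemma pd_big {x : R3} (j : Fin 3) (c δ : ℝ) {g1 g2 g3 g4 g5 g6 g7 g8 : R3 → ℝ}
    (h1 : DifferentiableAt ℝ g1 x) (h2 : DifferentiableAt ℝ g2 x)
    (h3 : DifferentiableAt ℝ g3 x) (h4 : DifferentiableAt ℝ g4 x)
    (h5 : DifferentiableAt ℝ g5 x) (h6 : DifferentiableAt ℝ g6 x)
    (h7 : DifferentiableAt ℝ g7 x) (h8 : DifferentiableAt ℝ g8 x) :
    pd j (fun y => c * (3 * ((g1 y - g2 y) + (g3 y - g4 y) + (g5 y - g6 y)) * δ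
        - 6 * (g7 y - g8 y))) x
      = c * (3 * ((pd j g1 x - pd j g2 x) + (pd j g3 x - pd j g4 x)
          + (pd j g5 x - pd j g6 x)) * δ - 6 * (pd j g7 x - pd j g8 x)) := by
  have Hs := ((h1.hasFDerivAt.sub h2.hasFDerivAt).add
      (h3.hasFDerivAt.sub h4.hasFDerivAt)).add (h5.hasFDerivAt.sub h6.hasFDerivAt)
  have H := (((Hs.const_mul (3:ℝ)).mul_const δ).sub
      ((h7.hasFDerivAt.sub h8.hasFDerivAt).const_mul (6:ℝ))).const_mul c
  show fderiv ℝ _ x (Pi.single j 1) = _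
  rw [(show HasFDerivAt (fun y => c * (3 * ((g1 y - g2 y) + (g3 y - g4 y) + (g5 y - g6 y)) * δ
      - 6 * (g7 y - g8 y))) _ x from H).fderiv]
  simp only [ContinuousLinearMap.smul_apply, ContinuousLinearMap.sub_apply,
    ContinuousLinearMap.add_apply, smul_eq_mul, pd]
  ring

lemma pd_comm {g : R3 → ℝ} (hg : ContDiff ℝ 2 g) (a b : Fin 3) (x : R3) :
    pd a (fun y => pd b g y) x = pd b (fun y => pd a g y) x := by
  have hder : ∀ y, HasFDerivAt g (fderiv ℝ g y) y := fun y =>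
    (hg.differentiable (by norm_num) y).hasFDerivAt
  have hfd : ContDiff ℝ 1 (fun y => fderiv ℝ g y) := hg.fderiv_right (by norm_num)
  have h2 : HasFDerivAt (fun y => fderiv ℝ g y) (fderiv ℝ (fderiv ℝ g) x) x :=
    (hfd.differentiable (by norm_num) x).hasFDerivAt
  have key : ∀ v : R3, fderiv ℝ (fun y => fderiv ℝ g y v) x
      = (ContinuousLinearMap.apply ℝ ℝ v).comp (fderiv ℝ (fderiv ℝ g) x) := by
    intro v
    exact (((ContinuousLinearMap.apply ℝ ℝ v).hasFDerivAt).comp x h2).fderiv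
  show fderiv ℝ (fun y => fderiv ℝ g y (Pi.single b 1)) x (Pi.single a 1)
      = fderiv ℝ (fun y => fderiv ℝ g y (Pi.single a 1)) x (Pi.single b 1)
  rw [key, key]
  exact second_derivative_symmetric hder h2 _ _

set_option maxHeartbeats 2000000 in
/-- with α₁ = −6α₃ and α₂ = 6α₃ the Curl of the isotropic moment
stress is symmetric for every C² matrix field P. -/
theorem stmt_19 (α₃ : ℝ) (P : R3 → M3) (hP : ContDiff ℝ 2 P) (x : R3) :
    isSymmM (CurlM (fun y => fun i j =>
      (-6 * α₃) * devv (symMat (CurlM P y)) i j + (6 * α₃) * skeww (CurlM P y) i j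
        + α₃ * trM (CurlM P y) * idM i j) x) := by
  have hcomp : ∀ c d : Fin 3, ContDiff ℝ 2 (fun z => P z c d) := fun c d =>
    contDiff_pi.mp (contDiff_pi.mp hP c) d
  have hD : ∀ (a c d : Fin 3), Differentiable ℝ (fun y => pd a (fun z => P z c d) y) := by
    intro a c d
    have h1 : ContDiff ℝ 1 (fun y => fderiv ℝ (fun z => P z c d) y) :=
      (hcomp c d).fderiv_right (by norm_num)
    exact (h1.clm_apply contDiff_const).differentiable (by norm_num)
  have hfield : (fun (y : R3) => fun i j =>
      (-6 * α₃) * devv (symMat (CurlM P y)) i j + (6 * α₃) * skeww (CurlM P y) i j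
        + α₃ * trM (CurlM P y) * idM i j)
      = fun y => fun i j => α₃ * (3 * trM (CurlM P y) * idM i j - 6 * CurlM P y j i) := by
    funext y i j
    simp only [devv, symMat, skeww, trM, idM, Fin.sum_univ_three]
    fin_cases i <;> fin_cases j <;> simp <;> ring
  have htrM : ∀ y : R3, trM (CurlM P y)
      = (pd 1 (fun z => P z 0 2) y - pd 2 (fun z => P z 0 1) y)
        + (pd 2 (fun z => P z 1 0) y - pd 0 (fun z => P z 1 2) y)
        + (pd 0 (fun z => P z 2 1) y - pd 1 (fun z => P z 2 0) y) := by
    intro y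
    simp only [trM, Fin.sum_univ_three, CurlM_app0, CurlM_app1, CurlM_app2]
  have master : ∀ (a : Fin 3) (δ : ℝ) (e₁ c₁ d₁ e₂ c₂ d₂ : Fin 3),
      pd a (fun y => α₃ * (3 * ((pd 1 (fun z => P z 0 2) y - pd 2 (fun z => P z 0 1) y)
          + (pd 2 (fun z => P z 1 0) y - pd 0 (fun z => P z 1 2) y)
          + (pd 0 (fun z => P z 2 1) y - pd 1 (fun z => P z 2 0) y)) * δ
          - 6 * (pd e₁ (fun z => P z c₁ d₁) y - pd e₂ (fun z => P z c₂ d₂) y))) x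
        = α₃ * (3 * ((pd a (fun y => pd 1 (fun z => P z 0 2) y) x
              - pd a (fun y => pd 2 (fun z => P z 0 1) y) x)
            + (pd a (fun y => pd 2 (fun z => P z 1 0) y) x
              - pd a (fun y => pd 0 (fun z => P z 1 2) y) x)
            + (pd a (fun y => pd 0 (fun z => P z 2 1) y) x
              - pd a (fun y => pd 1 (fun z => P z 2 0) y) x)) * δ
            - 6 * (pd a (fun y => pd e₁ (fun z => P z c₁ d₁) y) x
              - pd a (fun y => pd e₂ (fun z => P z c₂ d₂) y) x)) :=
    fun a δ e₁ c₁ d₁ e₂ c₂ d₂ => pd_big a α₃ δ (hD 1 0 2 x) (hD 2 0 1 x) (hD 2 1 0 x)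
      (hD 0 1 2 x) (hD 0 2 1 x) (hD 1 2 0 x) (hD e₁ c₁ d₁ x) (hD e₂ c₂ d₂ x)
  have hswap : ∀ (a b c d : Fin 3),
      pd a (fun y => pd b (fun z => P z c d) y) x
        = pd b (fun y => pd a (fun z => P z c d) y) x :=
    fun a b c d => pd_comm (hcomp c d) a b x
  rw [hfield]
  set Q : R3 → M3 :=
    fun y => fun i j => α₃ * (3 * trM (CurlM P y) * idM i j - 6 * CurlM P y j i) with hQ
  have e01 : CurlM Q x 0 1 = CurlM Q x 1 0 := by
    rw [CurlM_app1, CurlM_app0, hQ]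
    simp only [CurlM_app0, CurlM_app1, CurlM_app2, htrM, master, idM, Fin.reduceEq, reduceIte,
      hswap 1 0, hswap 2 0, hswap 2 1]
    ring
  have e02 : CurlM Q x 0 2 = CurlM Q x 2 0 := by
    rw [CurlM_app2, CurlM_app0, hQ]
    simp only [CurlM_app0, CurlM_app1, CurlM_app2, htrM, master, idM, Fin.reduceEq, reduceIte,
      hswap 1 0, hswap 2 0, hswap 2 1]
    ring
  have e12 : CurlM Q x 1 2 = CurlM Q x 2 1 := by
    rw [CurlM_app2, CurlM_app1, hQ]
    simp only [CurlM_app0, CurlM_app1, CurlM_app2, htrM, master, idM, Fin.reduceEq, reduceIte,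
      hswap 1 0, hswap 2 0, hswap 2 1]
    ring
  intro i j
  fin_cases i <;> fin_cases j
  exacts [rfl, e01, e02, e01.symm, rfl, e12, e02.symm, e12.symm, rfl]
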